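/- Let (P, ≤, ', ⊥, ⊤) be a bounded strictly modular poset with a complementation ' (i.e., U(x,x') = {⊤} and L(x,x') = {⊥} for all x). Define M(x,y) := L(U(x,y') ∪ {y}) and R(x,y) := L(U(L(x,y) ∪ {x'})). Then the operator divisibility identity M(R(x,y), x) = L(x,y) holds for all x, y ∈ P, where M(A, x) for a set A means L(U(A ∪ {x'}) ∪ {x}). -/
import Mathlib

section Aux
variable {P : Type*} [Preorder P] (S : Set P)

lemma aux_sub_ul : S ⊆ upperBounds (lowerBounds S) := fun s hs _ hl => hl hs

lemma aux_sub_lu : S ⊆ lowerBounds (upperBounds S) := fun s hs _ hu => hu hs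

lemma aux_lul : lowerBounds (upperBounds (lowerBounds S)) = lowerBounds S :=
  Set.Subset.antisymm (lowerBounds_mono_set (aux_sub_ul S)) (aux_sub_lu _)

lemma aux_ulu : upperBounds (lowerBounds (upperBounds S)) = upperBounds S :=
  Set.Subset.antisymm (upperBounds_mono_set (aux_sub_lu S)) (aux_sub_ul _)

end Aux

lemma aux_union_bot {P : Type*} [PartialOrder P] [OrderBot P] (S : Set P) :
    upperBounds (S ∪ {(⊥ : P)}) = upperBounds S := by
  apply Set.Subset.antisymm (upperBounds_mono_set Set.subset_union_left)
  intro u hu z hz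
  rcases hz with hz | hz
  · exact hu hz
  · simp only [Set.mem_singleton_iff] at hz; subst hz; exact bot_le

/-- In a bounded strictly modular poset with complementation `n`,
with `R(x,y) := L(U(L(x,y) ∪ {n x}))` and `M(A,x) := L(U(A ∪ {n x}) ∪ {x})`,
the operator divisibility identity `M(R(x,y), x) = L(x,y)` holds. -/
theorem stmt_10 {P : Type*} [PartialOrder P] [BoundedOrder P] (n : P → P)
    (h1 : ∀ (x y : P) (Z : Set P), x ∈ lowerBounds Z →
      lowerBounds (upperBounds {x, y} ∪ Z) =
        lowerBounds (upperBounds ({x} ∪ lowerBounds ({y} ∪ Z))))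
    (h2 : ∀ (y z : P) (X : Set P), (∀ w ∈ lowerBounds X, w ≤ z) →
      lowerBounds (upperBounds (lowerBounds X ∪ {y}) ∪ {z}) =
        lowerBounds (upperBounds (lowerBounds X ∪ lowerBounds {y, z})))
    (hU : ∀ x : P, upperBounds {x, n x} = {⊤})
    (hL : ∀ x : P, lowerBounds {x, n x} = {⊥}) :
    ∀ x y : P,
      lowerBounds
        (upperBounds
          (lowerBounds (upperBounds (lowerBounds {x, y} ∪ {n x})) ∪ {n x}) ∪ {x}) =
        lowerBounds {x, y} := by
  intro x y
  set A : Set P := lowerBounds {x, y} ∪ {n x} with hA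
  have hnx : n x ∈ lowerBounds (upperBounds A) :=
    aux_sub_lu A (Set.mem_union_right _ rfl)
  have habs : lowerBounds (upperBounds A) ∪ {n x} = lowerBounds (upperBounds A) := by
    apply Set.union_eq_self_of_subset_right
    intro z hz; simp only [Set.mem_singleton_iff] at hz; subst hz; exact hnx
  rw [habs, aux_ulu A, hA]
  have hle : ∀ w ∈ lowerBounds ({x, y} : Set P), w ≤ x := fun w hw =>
    hw (Set.mem_insert _ _)
  rw [h2 (n x) x {x, y} hle]
  have : lowerBounds ({n x, x} : Set P) = {⊥} := by rw [Set.pair_comm]; exact hL x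
  rw [this, aux_union_bot, aux_lul]
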